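/- arXiv:2010.13195 — 6 statements merged into one kernel-verified Lean document; each statement's English description precedes it below -/
import Mathlib

section
/- Let C be a convex set in the plane not containing the intersection point c of two crossing line segments [f₀,f₂] and [f₁,f₃], where the four open regions R¹, R², R³, R⁴ are the connected components of the complement (within an open disk containing everything) of the union of the two segments. Then C cannot have a point in all four regions R¹, R², R³, R⁴. -/
/-- The cross product (signed area form) of two vectors in the plane. -/
def crossP (u v : ℝ × ℝ) : ℝ := u.1 * v.2 - u.2 * v.1

/-- The open unit disk in the plane. -/
def unitDisk : Set (ℝ × ℝ) := {p | p.1 ^ 2 + p.2 ^ 2 < 1}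

lemma crossP_affine (u w p q : ℝ × ℝ) (s t : ℝ) (hst : s + t = 1) :
    crossP u (s • p + t • q - w) = s * crossP u (p - w) + t * crossP u (q - w) := by
  have hs : s = 1 - t := by linarith
  subst hs
  simp only [crossP, Prod.smul_fst, Prod.smul_snd, Prod.fst_add, Prod.snd_add,
    Prod.fst_sub, Prod.snd_sub, smul_eq_mul]
  ring

lemma key (u w u' w' : ℝ × ℝ) (C : Set (ℝ × ℝ)) (hC : Convex ℝ C)
    (p q : ℝ × ℝ) (hp : p ∈ C) (hq : q ∈ C)
    (ha : 0 < crossP u (p - w)) (hb : crossP u (q - w) < 0) :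
    ∃ m ∈ C, crossP u (m - w) = 0 ∧
      ∃ s t : ℝ, 0 < s ∧ 0 < t ∧ s + t = 1 ∧
        crossP u' (m - w') = s * crossP u' (p - w') + t * crossP u' (q - w') := by
  set a := crossP u (p - w) with hadef
  set b := crossP u (q - w) with hbdef
  have hab : 0 < a - b := by linarith
  set t : ℝ := a / (a - b) with htdef
  have ht : 0 < t := div_pos ha hab
  have ht1 : t < 1 := by
    rw [htdef, div_lt_one hab]; linarith
  set s : ℝ := 1 - t with hsdef
  have hs : 0 < s := by linarith
  have hst : s + t = 1 := by ring
  refine ⟨s • p + t • q, hC hp hq hs.le ht.le hst, ?_, s, t, hs, ht, hst, ?_⟩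
  · rw [crossP_affine u w p q s t hst, ← hadef, ← hbdef, hsdef, htdef]
    field_simp
    ring
  · exact crossP_affine u' w' p q s t hst

lemma crossP_seg_zero (x y c : ℝ × ℝ) (hc : c ∈ segment ℝ x y) :
    crossP (y - x) (c - x) = 0 := by
  obtain ⟨a, b, ha, hb, hab, rfl⟩ := hc
  simp only [crossP, Prod.smul_fst, Prod.smul_snd, Prod.fst_add, Prod.snd_add,
    Prod.fst_sub, Prod.snd_sub, smul_eq_mul]
  have : a = 1 - b := by linarith
  subst this
  ring

/-- let `f₀, f₁, f₂, f₃` be points on the unit circle such that the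
chords `[f₀,f₂]` and `[f₁,f₃]` cross at a point `c`, dividing the open unit disk
into four open regions `R¹, R², R³, R⁴` (the four sign combinations with respect
to the two chord lines). A convex subset `C` of the open unit disk with `c ∉ C`
cannot have a point in all four regions. -/
theorem convex_not_in_four_regions (f₀ f₁ f₂ f₃ c : ℝ × ℝ)
    (hf₀ : f₀.1 ^ 2 + f₀.2 ^ 2 = 1) (hf₁ : f₁.1 ^ 2 + f₁.2 ^ 2 = 1)
    (hf₂ : f₂.1 ^ 2 + f₂.2 ^ 2 = 1) (hf₃ : f₃.1 ^ 2 + f₃.2 ^ 2 = 1)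
    (hc₁ : c ∈ segment ℝ f₀ f₂) (hc₂ : c ∈ segment ℝ f₁ f₃)
    (hcross : crossP (f₂ - f₀) (f₃ - f₁) ≠ 0)
    (R1 R2 R3 R4 : Set (ℝ × ℝ))
    (hR1 : R1 = unitDisk ∩
      {x | crossP (f₂ - f₀) (x - f₀) > 0 ∧ crossP (f₃ - f₁) (x - f₁) > 0})
    (hR2 : R2 = unitDisk ∩
      {x | crossP (f₂ - f₀) (x - f₀) > 0 ∧ crossP (f₃ - f₁) (x - f₁) < 0})
    (hR3 : R3 = unitDisk ∩
      {x | crossP (f₂ - f₀) (x - f₀) < 0 ∧ crossP (f₃ - f₁) (x - f₁) < 0})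
    (hR4 : R4 = unitDisk ∩
      {x | crossP (f₂ - f₀) (x - f₀) < 0 ∧ crossP (f₃ - f₁) (x - f₁) > 0})
    (C : Set (ℝ × ℝ)) (hC : Convex ℝ C) (hCd : C ⊆ unitDisk) (hcC : c ∉ C) :
    ¬((C ∩ R1).Nonempty ∧ (C ∩ R2).Nonempty ∧
      (C ∩ R3).Nonempty ∧ (C ∩ R4).Nonempty) := by
  rintro ⟨⟨p1, hp1C, hp1R⟩, ⟨p2, hp2C, hp2R⟩, ⟨p3, hp3C, hp3R⟩, ⟨p4, hp4C, hp4R⟩⟩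
  rw [hR1] at hp1R; rw [hR2] at hp2R; rw [hR3] at hp3R; rw [hR4] at hp4R
  obtain ⟨-, h1u, h1v⟩ := hp1R
  obtain ⟨-, h2u, h2v⟩ := hp2R
  obtain ⟨-, h3u, h3v⟩ := hp3R
  obtain ⟨-, h4u, h4v⟩ := hp4R
  set u := f₂ - f₀
  set v := f₃ - f₁
  -- m1 on [p1,p2]: L2 = 0, L1 > 0
  obtain ⟨m1, hm1C, hm1v, s1, t1, hs1, ht1, hst1, hm1u⟩ :=
    key v f₁ u f₀ C hC p1 p2 hp1C hp2C h1v h2v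
  have hm1u' : 0 < crossP u (m1 - f₀) := by
    rw [hm1u]; positivity
  -- m2 on [p4,p3]: L2 = 0, L1 < 0
  obtain ⟨m2, hm2C, hm2v, s2, t2, hs2, ht2, hst2, hm2u⟩ :=
    key v f₁ u f₀ C hC p4 p3 hp4C hp3C h4v h3v
  have hm2u' : crossP u (m2 - f₀) < 0 := by
    rw [hm2u]
    nlinarith
  -- m on [m1,m2]: L1 = 0 and L2 = 0
  obtain ⟨m, hmC, hmu, s3, t3, hs3, ht3, hst3, hmv⟩ :=
    key u f₀ v f₁ C hC m1 m2 hm1C hm2C hm1u' hm2u'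
  have hmv' : crossP v (m - f₁) = 0 := by rw [hmv, hm1v, hm2v]; ring
  -- c satisfies both equations too
  have hcu : crossP u (c - f₀) = 0 := crossP_seg_zero f₀ f₂ c hc₁
  have hcv : crossP v (c - f₁) = 0 := crossP_seg_zero f₁ f₃ c hc₂
  -- conclude m = c
  have hd1 : crossP u (m - c) = 0 := by
    have : crossP u (m - c) = crossP u (m - f₀) - crossP u (c - f₀) := by
      simp only [crossP, Prod.fst_sub, Prod.snd_sub]; ring
    rw [this, hmu, hcu]; ring
  have hd2 : crossP v (m - c) = 0 := by
    have : crossP v (m - c) = crossP v (m - f₁) - crossP v (c - f₁) := by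
      simp only [crossP, Prod.fst_sub, Prod.snd_sub]; ring
    rw [this, hmv', hcv]; ring
  have hmeq : m = c := by
    have h1 : (m - c).1 * crossP u v = 0 := by
      simp only [crossP, Prod.fst_sub, Prod.snd_sub] at hd1 hd2 ⊢
      linear_combination v.1 * hd1 - u.1 * hd2
    have h2 : (m - c).2 * crossP u v = 0 := by
      simp only [crossP, Prod.fst_sub, Prod.snd_sub] at hd1 hd2 ⊢
      linear_combination v.2 * hd1 - u.2 * hd2
    have e1 : (m - c).1 = 0 := by
      rcases mul_eq_zero.mp h1 with h | h
      · exact h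
      · exact absurd h hcross
    have e2 : (m - c).2 = 0 := by
      rcases mul_eq_zero.mp h2 with h | h
      · exact h
      · exact absurd h hcross
    have : m - c = 0 := Prod.ext e1 e2
    have := sub_eq_zero.mp this
    exact this
  exact hcC (hmeq ▸ hmC)
end

section
/- Let L₁ and L₂ be two lines in the plane crossing at a point c, dividing the plane into four closed quadrants. Let C be a convex set not containing c. If C has points in the closures of three of the four quadrants that are pairwise non-opposite in a cyclic order (e.g., in R̄¹, R̄⁴, R̄³), then C has no point in the closure of the remaining quadrant minus the two bounding rays (i.e., C ∩ R² = ∅ for the open fourth quadrant R²). -/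
lemma exists_zero_comb (A B : ℝ) (hA : A ≤ 0) (hB : 0 ≤ B) :
    ∃ t : ℝ, 0 ≤ t ∧ t ≤ 1 ∧ (1 - t) * A + t * B = 0 := by
  by_cases h : A - B = 0
  · refine ⟨0, le_refl 0, zero_le_one, ?_⟩
    have : A = 0 := le_antisymm hA (by linarith)
    simp [this]
  · have hlt : A - B < 0 := lt_of_le_of_ne (by linarith) h
    refine ⟨A / (A - B), ?_, ?_, ?_⟩
    · rw [div_nonneg_iff]; right; exact ⟨hA, hlt.le⟩
    · rw [div_le_one_of_neg hlt]; linarith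
    · field_simp; ring

lemma crossP_comb (c w p q : ℝ × ℝ) (t : ℝ) :
    crossP w ((1 - t) • p + t • q - c)
      = (1 - t) * crossP w (p - c) + t * crossP w (q - c) := by
  simp only [crossP, Prod.fst_add, Prod.snd_add, Prod.fst_sub, Prod.snd_sub,
    Prod.smul_fst, Prod.smul_snd, smul_eq_mul]
  ring

/-- two distinct lines through `c` (with direction vectors `u, v`)
divide the plane into four open quadrants `R¹, R², R³, R⁴` in cyclic order.
If a convex set `C` with `c ∉ C` has points in the closures of `R¹`, `R⁴` and
`R³`, then `C` has no point in the remaining open quadrant `R²`. -/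
theorem convex_misses_fourth_quadrant (c u v : ℝ × ℝ)
    (hu : u ≠ 0) (hv : v ≠ 0) (huv : crossP u v ≠ 0)
    (R1 R2 R3 R4 : Set (ℝ × ℝ))
    (hR1 : R1 = {x | crossP u (x - c) > 0 ∧ crossP v (x - c) > 0})
    (hR2 : R2 = {x | crossP u (x - c) < 0 ∧ crossP v (x - c) > 0})
    (hR3 : R3 = {x | crossP u (x - c) < 0 ∧ crossP v (x - c) < 0})
    (hR4 : R4 = {x | crossP u (x - c) > 0 ∧ crossP v (x - c) < 0})
    (C : Set (ℝ × ℝ)) (hC : Convex ℝ C) (hcC : c ∉ C)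
    (h1 : (C ∩ closure R1).Nonempty) (h4 : (C ∩ closure R4).Nonempty)
    (h3 : (C ∩ closure R3).Nonempty) :
    C ∩ R2 = ∅ := by
  have hcont : ∀ w : ℝ × ℝ, Continuous (fun x : ℝ × ℝ => crossP w (x - c)) := by
    intro w
    unfold crossP
    fun_prop
  -- closures of quadrants are contained in the corresponding closed quadrants
  have hcl : ∀ (ε δ : ℝ) (R : Set (ℝ × ℝ)),
      R = {x | ε * crossP u (x - c) > 0 ∧ δ * crossP v (x - c) > 0} →
      closure R ⊆ {x | 0 ≤ ε * crossP u (x - c) ∧ 0 ≤ δ * crossP v (x - c)} := by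
    intro ε δ R hR
    apply closure_minimal
    · rw [hR]; intro x hx; exact ⟨hx.1.le, hx.2.le⟩
    · exact IsClosed.inter
        (isClosed_le continuous_const (continuous_const.mul (hcont u)))
        (isClosed_le continuous_const (continuous_const.mul (hcont v)))
  obtain ⟨a, haC, haR⟩ := h1
  obtain ⟨b, hbC, hbR⟩ := h4
  obtain ⟨d, hdC, hdR⟩ := h3
  have ha := hcl 1 1 R1 (by rw [hR1]; simp) haR
  have hb := hcl 1 (-1) R4 (by rw [hR4]; ext x; simp) hbR
  have hd := hcl (-1) (-1) R3 (by rw [hR3]; ext x; simp) hdR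
  simp only [Set.mem_setOf_eq, one_mul, neg_mul, Left.nonneg_neg_iff] at ha hb hd
  -- signs: ha : f a ≥ 0 ∧ g a ≥ 0 ; hb : f b ≥ 0 ∧ g b ≤ 0 ; hd : f d ≤ 0 ∧ g d ≤ 0
  rw [Set.eq_empty_iff_forall_notMem]
  rintro x ⟨hxC, hxR⟩
  rw [hR2] at hxR
  obtain ⟨hxf, hxg⟩ := hxR
  -- point r on [d, x] with g r = 0, f r ≤ 0
  obtain ⟨t, ht0, ht1, hteq⟩ := exists_zero_comb (crossP v (d - c)) (crossP v (x - c)) hd.2 hxg.le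
  set r := (1 - t) • d + t • x with hrdef
  have hrC : r ∈ C := hC hdC hxC (by linarith) ht0 (by ring)
  have hrg : crossP v (r - c) = 0 := by rw [hrdef, crossP_comb]; exact hteq
  have hrf : crossP u (r - c) ≤ 0 := by
    rw [hrdef, crossP_comb]
    nlinarith [hd.1, hxf.le, ht0, ht1]
  -- point q on [b, a] with g q = 0, f q ≥ 0
  obtain ⟨s, hs0, hs1, hseq⟩ := exists_zero_comb (crossP v (b - c)) (crossP v (a - c)) hb.2 ha.2
  set q := (1 - s) • b + s • a with hqdef
  have hqC : q ∈ C := hC hbC haC (by linarith) hs0 (by ring)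
  have hqg : crossP v (q - c) = 0 := by rw [hqdef, crossP_comb]; exact hseq
  have hqf : 0 ≤ crossP u (q - c) := by
    rw [hqdef, crossP_comb]
    nlinarith [hb.1, ha.1, hs0, hs1]
  -- point w on [r, q] with f w = 0 and g w = 0, hence w = c
  obtain ⟨τ, hτ0, hτ1, hτeq⟩ := exists_zero_comb (crossP u (r - c)) (crossP u (q - c)) hrf hqf
  set w := (1 - τ) • r + τ • q with hwdef
  have hwC : w ∈ C := hC hrC hqC (by linarith) hτ0 (by ring)
  have hwf : crossP u (w - c) = 0 := by rw [hwdef, crossP_comb]; exact hτeq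
  have hwg : crossP v (w - c) = 0 := by
    rw [hwdef, crossP_comb, hrg, hqg]; ring
  have hwc : w = c := by
    have h1' : u.1 * (w - c).2 - u.2 * (w - c).1 = 0 := hwf
    have h2' : v.1 * (w - c).2 - v.2 * (w - c).1 = 0 := hwg
    have hdet : u.1 * v.2 - u.2 * v.1 ≠ 0 := huv
    have e1 : (u.1 * v.2 - u.2 * v.1) * (w - c).1 = 0 := by linear_combination v.1 * h1' - u.1 * h2'
    have e2 : (u.1 * v.2 - u.2 * v.1) * (w - c).2 = 0 := by linear_combination v.2 * h1' - u.2 * h2'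
    have hw1 : (w - c).1 = 0 := by
      rcases mul_eq_zero.mp e1 with h | h
      · exact absurd h hdet
      · exact h
    have hw2 : (w - c).2 = 0 := by
      rcases mul_eq_zero.mp e2 with h | h
      · exact absurd h hdet
      · exact h
    have : w - c = 0 := Prod.ext hw1 hw2
    exact sub_eq_zero.mp this
  exact hcC (hwc ▸ hwC)
end

section
/- Let R¹ be one of the four open regions formed by two crossing chords of the unit disk meeting at c, with adjacent regions R² and R⁴ and opposite region R³. Let C be a convex subset of the open unit disk with c ∉ C. Then C \ R¹ has at most two connected components; moreover if it has exactly two components, these components are C ∩ closure(R²) and C ∩ closure(R⁴), and each is convex. -/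
open Topology Filter

lemma crossP_expand (u c x : ℝ × ℝ) :
    crossP u (x - c) = (u.1 * x.2 - u.2 * x.1) - (u.1 * c.2 - u.2 * c.1) := by
  simp [crossP]; ring

lemma isLinearMap_cross (u : ℝ × ℝ) :
    IsLinearMap ℝ (fun x : ℝ × ℝ => u.1 * x.2 - u.2 * x.1) := by
  constructor
  · intro a b; simp; ring
  · intro r a; simp [smul_eq_mul]; ring

lemma continuous_cross (u c : ℝ × ℝ) : Continuous fun x : ℝ × ℝ => crossP u (x - c) := by
  simp only [crossP]
  fun_prop

lemma convex_cross_le (u c : ℝ × ℝ) : Convex ℝ {x : ℝ × ℝ | crossP u (x - c) ≤ 0} := by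
  have h : {x : ℝ × ℝ | crossP u (x - c) ≤ 0}
      = {x : ℝ × ℝ | u.1 * x.2 - u.2 * x.1 ≤ u.1 * c.2 - u.2 * c.1} := by
    ext x; rw [Set.mem_setOf_eq, Set.mem_setOf_eq, crossP_expand]; constructor <;> intro h <;> linarith
  rw [h]
  exact convex_halfSpace_le (isLinearMap_cross u) _

lemma isOpen_unitDisk : IsOpen unitDisk := by
  have : unitDisk = {p : ℝ × ℝ | p.1 ^ 2 + p.2 ^ 2 < 1} := rfl
  rw [this]
  exact isOpen_lt (by fun_prop) continuous_const

lemma mem_closure_aux (u v c x : ℝ × ℝ) (hu : u ≠ 0)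
    (hx : x ∈ unitDisk) (hf : crossP u (x - c) ≤ 0) (hg : 0 < crossP v (x - c)) :
    x ∈ closure (unitDisk ∩ {y | crossP u (y - c) < 0 ∧ crossP v (y - c) > 0}) := by
  set w : ℝ × ℝ := (u.2, -u.1) with hwdef
  have hu2 : u.1 ^ 2 + u.2 ^ 2 > 0 := by
    have h : u.1 ≠ 0 ∨ u.2 ≠ 0 := by
      by_contra hc; push_neg at hc
      exact hu (Prod.ext hc.1 hc.2)
    rcases h with h1 | h1 <;> positivity
  have hw : crossP u w < 0 := by
    simp only [crossP, hwdef]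
    nlinarith
  have hshift : ∀ (a : ℝ × ℝ) (t : ℝ),
      crossP a (x + t • w - c) = crossP a (x - c) + t * crossP a w := by
    intro a t; simp [crossP, smul_eq_mul]; ring
  have hcont : Continuous fun t : ℝ => x + t • w := by fun_prop
  have h0 : x + (0 : ℝ) • w = x := by simp
  have hOopen : IsOpen (unitDisk ∩ {y : ℝ × ℝ | 0 < crossP v (y - c)}) :=
    isOpen_unitDisk.inter (isOpen_lt continuous_const (continuous_cross v c))
  have hxO : x ∈ unitDisk ∩ {y : ℝ × ℝ | 0 < crossP v (y - c)} := ⟨hx, hg⟩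
  have hev1 : ∀ᶠ t in 𝓝 (0 : ℝ),
      x + t • w ∈ unitDisk ∩ {y : ℝ × ℝ | 0 < crossP v (y - c)} := by
    have := hcont.tendsto 0
    rw [h0] at this
    exact this.eventually (hOopen.mem_nhds hxO)
  have hev1' : ∀ᶠ t in 𝓝[>] (0 : ℝ),
      x + t • w ∈ unitDisk ∩ {y : ℝ × ℝ | 0 < crossP v (y - c)} :=
    hev1.filter_mono nhdsWithin_le_nhds
  have hev2 : ∀ᶠ t in 𝓝[>] (0 : ℝ), crossP u (x + t • w - c) < 0 := by
    filter_upwards [self_mem_nhdsWithin] with t ht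
    rw [hshift]
    have ht' : (0 : ℝ) < t := ht
    nlinarith
  have htend : Filter.Tendsto (fun t : ℝ => x + t • w) (𝓝[>] 0) (𝓝 x) := by
    have := hcont.tendsto 0
    rw [h0] at this
    exact this.mono_left nhdsWithin_le_nhds
  exact mem_closure_of_tendsto htend (by
    filter_upwards [hev1', hev2] with t h1 h2
    exact ⟨h1.1, h2, h1.2⟩)

lemma compIn_eq_left {A B U V : Set (ℝ × ℝ)} (hU : IsOpen U) (hV : IsOpen V)
    (hApre : IsPreconnected A) (hAU : A ⊆ U) (hBV : B ⊆ V)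
    (hUV : (A ∪ B) ∩ (U ∩ V) = ∅) {x : ℝ × ℝ} (hx : x ∈ A) :
    connectedComponentIn (A ∪ B) x = A := by
  apply Set.Subset.antisymm
  · set K := connectedComponentIn (A ∪ B) x with hK
    have hKS : K ⊆ A ∪ B := connectedComponentIn_subset _ _
    have hKpre : IsPreconnected K := isPreconnected_connectedComponentIn
    have hxK : x ∈ K := mem_connectedComponentIn (Or.inl hx)
    have hKV : K ∩ V = ∅ := by
      by_contra h
      have hne : (K ∩ V).Nonempty := Set.nonempty_iff_ne_empty.2 h
      obtain ⟨y, hyK, hyUV⟩ :=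
        hKpre U V hU hV (hKS.trans (Set.union_subset_union hAU hBV)) ⟨x, hxK, hAU hx⟩ hne
      have : y ∈ (A ∪ B) ∩ (U ∩ V) := ⟨hKS hyK, hyUV⟩
      rw [hUV] at this; exact this
    intro y hyK
    rcases hKS hyK with hyA | hyB
    · exact hyA
    · have hmem : y ∈ (∅ : Set (ℝ × ℝ)) := hKV ▸ (⟨hyK, hBV hyB⟩ : y ∈ K ∩ V)
      exact hmem.elim
  · exact hApre.subset_connectedComponentIn hx Set.subset_union_left

/-- let `R¹, R², R³, R⁴` (in cyclic order) be the four open regions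
of the open unit disk determined by two chords crossing at `c`, and let `C` be a
convex subset of the open disk with `c ∉ C`.  Then `C \ R¹` has at most two
connected components; if it has exactly two, they are `C ∩ closure R²` and
`C ∩ closure R⁴`, and each is convex. -/
theorem diff_region_components (c u v : ℝ × ℝ)
    (hu : u ≠ 0) (hv : v ≠ 0) (huv : crossP u v ≠ 0) (hcd : c ∈ unitDisk)
    (R1 R2 R4 : Set (ℝ × ℝ))
    (hR1 : R1 = unitDisk ∩ {x | crossP u (x - c) > 0 ∧ crossP v (x - c) > 0})
    (hR2 : R2 = unitDisk ∩ {x | crossP u (x - c) < 0 ∧ crossP v (x - c) > 0})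
    (hR4 : R4 = unitDisk ∩ {x | crossP u (x - c) > 0 ∧ crossP v (x - c) < 0})
    (C : Set (ℝ × ℝ)) (hC : Convex ℝ C) (hCd : C ⊆ unitDisk) (hcC : c ∉ C)
    (comps : Set (Set (ℝ × ℝ)))
    (hcomps : comps = {T | ∃ x ∈ C \ R1, T = connectedComponentIn (C \ R1) x}) :
    comps.ncard ≤ 2 ∧
      (comps.ncard = 2 →
        comps = {C ∩ closure R2, C ∩ closure R4} ∧
        Convex ℝ (C ∩ closure R2) ∧ Convex ℝ (C ∩ closure R4)) := by
  set A : Set (ℝ × ℝ) := C ∩ {x | crossP u (x - c) ≤ 0} with hAdef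
  set B : Set (ℝ × ℝ) := C ∩ {x | crossP v (x - c) ≤ 0} with hBdef
  have hA : Convex ℝ A := hC.inter (convex_cross_le u c)
  have hB : Convex ℝ B := hC.inter (convex_cross_le v c)
  have hS : C \ R1 = A ∪ B := by
    ext x
    simp only [hR1, hAdef, hBdef, Set.mem_diff, Set.mem_inter_iff, Set.mem_setOf_eq,
      Set.mem_union]
    constructor
    · rintro ⟨hxC, hn⟩
      rcases le_or_gt (crossP u (x - c)) 0 with h1 | h1
      · exact Or.inl ⟨hxC, h1⟩
      rcases le_or_gt (crossP v (x - c)) 0 with h2 | h2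
      · exact Or.inr ⟨hxC, h2⟩
      · exact absurd ⟨hCd hxC, h1, h2⟩ hn
    · rintro (⟨h1, h2⟩ | ⟨h1, h2⟩)
      · exact ⟨h1, fun h => absurd h.2.1 (not_lt.2 h2)⟩
      · exact ⟨h1, fun h => absurd h.2.2 (not_lt.2 h2)⟩
  by_cases h2 : A.Nonempty ∧ B.Nonempty ∧ A ∩ B = ∅
  · obtain ⟨hAne, hBne, hABdisj⟩ := h2
    have hgA : ∀ y ∈ A, 0 < crossP v (y - c) := by
      intro y hy
      by_contra h; push_neg at h
      exact absurd (show y ∈ A ∩ B from ⟨hy, hy.1, h⟩) (by rw [hABdisj]; exact Set.notMem_empty y)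
    have hfB : ∀ y ∈ B, 0 < crossP u (y - c) := by
      intro y hy
      by_contra h; push_neg at h
      exact absurd (show y ∈ A ∩ B from ⟨⟨hy.1, h⟩, hy⟩) (by rw [hABdisj]; exact Set.notMem_empty y)
    have hUopen : IsOpen {y : ℝ × ℝ | 0 < crossP v (y - c)} :=
      isOpen_lt continuous_const (continuous_cross v c)
    have hVopen : IsOpen {y : ℝ × ℝ | 0 < crossP u (y - c)} :=
      isOpen_lt continuous_const (continuous_cross u c)
    have hUV : (A ∪ B) ∩ ({y : ℝ × ℝ | 0 < crossP v (y - c)} ∩ {y : ℝ × ℝ | 0 < crossP u (y - c)}) = ∅ := by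
      ext y
      simp only [Set.mem_inter_iff, Set.mem_union, Set.mem_setOf_eq, Set.mem_empty_iff_false,
        iff_false, not_and]
      rintro (hyA | hyB) hgv hfu
      · exact absurd hyA.2 (not_le.2 hfu)
      · exact absurd hyB.2 (not_le.2 hgv)
    have hcompA : ∀ x ∈ A, connectedComponentIn (A ∪ B) x = A := fun x hx =>
      compIn_eq_left hUopen hVopen hA.isPreconnected hgA hfB hUV hx
    have hcompB : ∀ x ∈ B, connectedComponentIn (A ∪ B) x = B := by
      intro x hx
      rw [Set.union_comm]
      exact compIn_eq_left hVopen hUopen hB.isPreconnected hfB hgA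
        (by rw [Set.union_comm, Set.inter_comm {y : ℝ × ℝ | 0 < crossP u (y - c)}]; exact hUV) hx
    have hcompsEq : comps = {A, B} := by
      rw [hcomps, hS]
      ext T
      simp only [Set.mem_setOf_eq, Set.mem_insert_iff, Set.mem_singleton_iff]
      constructor
      · rintro ⟨y, hy, rfl⟩
        rcases hy with hyA | hyB
        · exact Or.inl (hcompA y hyA)
        · exact Or.inr (hcompB y hyB)
      · rintro (rfl | rfl)
        · obtain ⟨a, ha⟩ := hAne; exact ⟨a, Or.inl ha, (hcompA a ha).symm⟩
        · obtain ⟨b, hb⟩ := hBne; exact ⟨b, Or.inr hb, (hcompB b hb).symm⟩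
    have hAneB : A ≠ B := by
      intro h
      obtain ⟨a, ha⟩ := hAne
      exact absurd (show a ∈ A ∩ B from ⟨ha, h ▸ ha⟩) (by rw [hABdisj]; exact Set.notMem_empty a)
    have hAeq : A = C ∩ closure R2 := by
      apply Set.Subset.antisymm
      · intro y hy
        exact ⟨hy.1, by rw [hR2]; exact mem_closure_aux u v c y hu (hCd hy.1) hy.2 (hgA y hy)⟩
      · rintro y ⟨hyC, hycl⟩
        refine ⟨hyC, ?_⟩
        have hcl : closure R2 ⊆ {y : ℝ × ℝ | crossP u (y - c) ≤ 0} := by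
          apply closure_minimal
          · rw [hR2]; rintro z ⟨_, hz1, _⟩; exact le_of_lt hz1
          · exact isClosed_le (continuous_cross u c) continuous_const
        exact hcl hycl
    have hR4' : R4 = unitDisk ∩ {y : ℝ × ℝ | crossP v (y - c) < 0 ∧ crossP u (y - c) > 0} := by
      rw [hR4]; ext y
      simp only [Set.mem_inter_iff, Set.mem_setOf_eq]
      tauto
    have hBeq : B = C ∩ closure R4 := by
      apply Set.Subset.antisymm
      · intro y hy
        exact ⟨hy.1, by rw [hR4']; exact mem_closure_aux v u c y hv (hCd hy.1) hy.2 (hfB y hy)⟩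
      · rintro y ⟨hyC, hycl⟩
        refine ⟨hyC, ?_⟩
        have hcl : closure R4 ⊆ {y : ℝ × ℝ | crossP v (y - c) ≤ 0} := by
          apply closure_minimal
          · rw [hR4']; rintro z ⟨_, hz1, _⟩; exact le_of_lt hz1
          · exact isClosed_le (continuous_cross v c) continuous_const
        exact hcl hycl
    refine ⟨by rw [hcompsEq]; exact (Set.ncard_pair hAneB).le, fun _ => ?_⟩
    rw [hcompsEq, hAeq, hBeq]
    exact ⟨rfl, by rw [← hAeq]; exact hA, by rw [← hBeq]; exact hB⟩
  · have hSpre : IsPreconnected (A ∪ B) := by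
      rcases Set.eq_empty_or_nonempty (A ∩ B) with hemp | hne
      · push_neg at h2
        rcases Set.eq_empty_or_nonempty A with hA0 | hAne
        · rw [hA0, Set.empty_union]; exact hB.isPreconnected
        rcases Set.eq_empty_or_nonempty B with hB0 | hBne
        · rw [hB0, Set.union_empty]; exact hA.isPreconnected
        · exact absurd hemp (Set.nonempty_iff_ne_empty.1 (h2 hAne hBne))
      · obtain ⟨z, hzA, hzB⟩ := hne
        exact IsPreconnected.union z hzA hzB hA.isPreconnected hB.isPreconnected
    have hsub : comps ⊆ {A ∪ B} := by
      rw [hcomps, hS]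
      rintro T ⟨y, hy, rfl⟩
      exact hSpre.connectedComponentIn hy
    have hle : comps.ncard ≤ 1 := by
      calc comps.ncard ≤ ({A ∪ B} : Set (Set (ℝ × ℝ))).ncard :=
            Set.ncard_le_ncard hsub (Set.finite_singleton _)
        _ = 1 := Set.ncard_singleton _
    exact ⟨hle.trans (by norm_num), fun h => by omega⟩
end

section
/- Let ℐ be a finite family of 2-intervals (each a union of one interval from each of two fixed disjoint lines) with no two disjoint members (matching number ν(ℐ) = 1). Then ℐ can be pierced by 2 points. -/
open Finset Set

/-- Core combinatorial lemma: a finite indexed family of pairs of closed real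
intervals, any two of which meet in the first or the second coordinate, can be
pierced by one point per coordinate. -/
theorem core_two_interval {ι : Type*} (s : Finset ι) (a b c d : ι → ℝ)
    (H : ∀ i ∈ s, ∀ j ∈ s,
      (a i ≤ b i ∧ a j ≤ b j ∧ a i ≤ b j ∧ a j ≤ b i) ∨
      (c i ≤ d i ∧ c j ≤ d j ∧ c i ≤ d j ∧ c j ≤ d i)) :
    ∃ p q : ℝ, ∀ i ∈ s, (a i ≤ p ∧ p ≤ b i) ∨ (c i ≤ q ∧ q ≤ d i) := by
  classical
  -- the four-interval argument
  have quad : ∀ i ∈ s, ∀ j ∈ s, ∀ k ∈ s, ∀ l ∈ s,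
      ¬(a i ≤ b i ∧ a j ≤ b j ∧ a i ≤ b j ∧ a j ≤ b i) →
      ¬(a k ≤ b k ∧ a l ≤ b l ∧ a k ≤ b l ∧ a l ≤ b k) →
      min (c k) (c l) ≤ max (d i) (d j) := by
    intro i hi j hj k hk l hl hij hkl
    by_contra hlt
    push_neg at hlt
    have hik : d i < c k := ((le_max_left _ _).trans_lt hlt).trans_le (min_le_left _ _)
    have hil : d i < c l := ((le_max_left _ _).trans_lt hlt).trans_le (min_le_right _ _)
    have hjk : d j < c k := ((le_max_right _ _).trans_lt hlt).trans_le (min_le_left _ _)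
    have hjl : d j < c l := ((le_max_right _ _).trans_lt hlt).trans_le (min_le_right _ _)
    obtain ⟨h1, h2, h3, h4⟩ := (H i hi k hk).resolve_right
      (fun h => absurd h.2.2.2 (not_le.2 hik))
    obtain ⟨_, h5, h6, h7⟩ := (H i hi l hl).resolve_right
      (fun h => absurd h.2.2.2 (not_le.2 hil))
    obtain ⟨h8, _, h9, h10⟩ := (H j hj k hk).resolve_right
      (fun h => absurd h.2.2.2 (not_le.2 hjk))
    obtain ⟨_, _, h11, h12⟩ := (H j hj l hl).resolve_right
      (fun h => absurd h.2.2.2 (not_le.2 hjl))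
    have hdisj : b i < a j ∨ b j < a i := by
      by_contra hc
      push_neg at hc
      exact hij ⟨h1, h8, hc.2, hc.1⟩
    rcases hdisj with h | h
    · exact hkl ⟨h2, h5, by linarith, by linarith⟩
    · exact hkl ⟨h2, h5, by linarith, by linarith⟩
  -- the set of pairs whose first intervals are disjoint
  set s2 : Finset (ι × ι) :=
    (s ×ˢ s).filter
      (fun e => ¬(a e.1 ≤ b e.1 ∧ a e.2 ≤ b e.2 ∧ a e.1 ≤ b e.2 ∧ a e.2 ≤ b e.1))
    with hs2def
  have mem_s2 : ∀ e : ι × ι, e ∈ s2 ↔ e.1 ∈ s ∧ e.2 ∈ s ∧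
      ¬(a e.1 ≤ b e.1 ∧ a e.2 ≤ b e.2 ∧ a e.1 ≤ b e.2 ∧ a e.2 ≤ b e.1) := by
    intro e
    simp [hs2def, Finset.mem_filter, Finset.mem_product, and_assoc]
  by_cases h2 : s2.Nonempty
  · -- q := Helly point of the intervals B_i ∪ B_j over disjoint pairs (i,j)
    set q : ℝ := s2.sup' h2 (fun e => min (c e.1) (c e.2)) with hqdef
    have hunion : ∀ e ∈ s2, (c e.1 ≤ q ∧ q ≤ d e.1) ∨ (c e.2 ≤ q ∧ q ≤ d e.2) := by
      intro e he
      obtain ⟨he1, he2, hnm⟩ := (mem_s2 e).mp he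
      have hlo : min (c e.1) (c e.2) ≤ q := Finset.le_sup' (fun e => min (c e.1) (c e.2)) he
      have hhi : q ≤ max (d e.1) (d e.2) := by
        refine Finset.sup'_le h2 _ (fun f hf => ?_)
        obtain ⟨hf1, hf2, hnf⟩ := (mem_s2 f).mp hf
        exact quad e.1 he1 e.2 he2 f.1 hf1 f.2 hf2 hnm hnf
      obtain ⟨hb1, hb2, hb3, hb4⟩ := (H e.1 he1 e.2 he2).resolve_left hnm
      rcases min_le_iff.mp hlo with hc1 | hc2
      · rcases le_or_gt q (d e.1) with hd1 | hd1
        · exact Or.inl ⟨hc1, hd1⟩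
        · refine Or.inr ⟨by linarith, ?_⟩
          rcases le_max_iff.mp hhi with h | h
          · linarith
          · exact h
      · rcases le_or_gt (c e.1) q with hc1 | hc1
        · rcases le_or_gt q (d e.1) with hd1 | hd1
          · exact Or.inl ⟨hc1, hd1⟩
          · refine Or.inr ⟨hc2, ?_⟩
            rcases le_max_iff.mp hhi with h | h
            · linarith
            · exact h
        · exact Or.inr ⟨hc2, by linarith⟩
    -- members not pierced by q
    set s3 : Finset ι := s.filter (fun i => ¬(c i ≤ q ∧ q ≤ d i)) with hs3def
    have habmeet : ∀ j ∈ s3, ∀ i ∈ s3,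
        (a j ≤ b j ∧ a i ≤ b i ∧ a j ≤ b i ∧ a i ≤ b j) := by
      intro j hj i hi
      obtain ⟨hjs, hjq⟩ := Finset.mem_filter.mp hj
      obtain ⟨his, hiq⟩ := Finset.mem_filter.mp hi
      by_contra hm
      have hji : (j, i) ∈ s2 := (mem_s2 (j, i)).mpr ⟨hjs, his, hm⟩
      rcases hunion (j, i) hji with h | h
      · exact hjq h
      · exact hiq h
    by_cases h3 : s3.Nonempty
    · refine ⟨s3.sup' h3 a, q, fun i hi => ?_⟩
      by_cases hqi : c i ≤ q ∧ q ≤ d i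
      · exact Or.inr hqi
      · have hi3 : i ∈ s3 := Finset.mem_filter.mpr ⟨hi, hqi⟩
        refine Or.inl ⟨Finset.le_sup' a hi3, Finset.sup'_le h3 a (fun j hj => ?_)⟩
        exact (habmeet j hj i hi3).2.2.1
    · refine ⟨0, q, fun i hi => Or.inr ?_⟩
      by_contra hqi
      exact h3 ⟨i, Finset.mem_filter.mpr ⟨hi, hqi⟩⟩
  · -- no disjoint pair on the first line: Helly on the first coordinate
    by_cases hs : s.Nonempty
    · refine ⟨s.sup' hs a, 0, fun i hi => Or.inl ⟨Finset.le_sup' a hi, ?_⟩⟩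
      refine Finset.sup'_le hs a (fun j hj => ?_)
      by_contra hm
      have : (j, i) ∈ s2 := by
        refine (mem_s2 (j, i)).mpr ⟨hj, hi, fun h => hm h.2.2.1⟩
      exact h2 ⟨(j, i), this⟩
    · exact ⟨0, 0, fun i hi => absurd ⟨i, hi⟩ hs⟩

/-- Tardos's theorem, case ν = 1: a finite family of 2-intervals
(each the union of a closed interval on each of two disjoint copies of ℝ,
modelled as `ℝ ⊕ ℝ`) in which no two members are disjoint can be pierced by
two points. -/
theorem two_intervals_nu_one_pierce_two (ℐ : Finset (Set (ℝ ⊕ ℝ)))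
    (h2int : ∀ F ∈ ℐ, ∃ a b c d : ℝ,
      F = Sum.inl '' Set.Icc a b ∪ Sum.inr '' Set.Icc c d)
    (hν : ∀ F₁ ∈ ℐ, ∀ F₂ ∈ ℐ, (F₁ ∩ F₂).Nonempty) :
    ∃ p q : ℝ ⊕ ℝ, ∀ F ∈ ℐ, p ∈ F ∨ q ∈ F := by
  classical
  have h2int' : ∀ F : Set (ℝ ⊕ ℝ), ∃ a b c d : ℝ, F ∈ ℐ →
      F = Sum.inl '' Set.Icc a b ∪ Sum.inr '' Set.Icc c d := by
    intro F
    by_cases h : F ∈ ℐ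
    · obtain ⟨a, b, c, d, hf⟩ := h2int F h
      exact ⟨a, b, c, d, fun _ => hf⟩
    · exact ⟨0, 0, 0, 0, fun h' => absurd h' h⟩
  choose a b c d hform using h2int'
  have H : ∀ F ∈ ℐ, ∀ G ∈ ℐ,
      (a F ≤ b F ∧ a G ≤ b G ∧ a F ≤ b G ∧ a G ≤ b F) ∨
      (c F ≤ d F ∧ c G ≤ d G ∧ c F ≤ d G ∧ c G ≤ d F) := by
    intro F hF G hG
    obtain ⟨x, hxF, hxG⟩ := hν F hF G hG
    rw [hform F hF] at hxF
    rw [hform G hG] at hxG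
    cases x with
    | inl u =>
      have hF' : u ∈ Set.Icc (a F) (b F) := by
        rcases hxF with ⟨u', hu', he⟩ | ⟨v, hv, he⟩
        · rwa [Sum.inl.inj he] at hu'
        · simp at he
      have hG' : u ∈ Set.Icc (a G) (b G) := by
        rcases hxG with ⟨u', hu', he⟩ | ⟨v, hv, he⟩
        · rwa [Sum.inl.inj he] at hu'
        · simp at he
      exact Or.inl ⟨hF'.1.trans hF'.2, hG'.1.trans hG'.2,
        hF'.1.trans hG'.2, hG'.1.trans hF'.2⟩
    | inr v =>
      have hF' : v ∈ Set.Icc (c F) (d F) := by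
        rcases hxF with ⟨u', hu', he⟩ | ⟨w, hw, he⟩
        · simp at he
        · rwa [Sum.inr.inj he] at hw
      have hG' : v ∈ Set.Icc (c G) (d G) := by
        rcases hxG with ⟨u', hu', he⟩ | ⟨w, hw, he⟩
        · simp at he
        · rwa [Sum.inr.inj he] at hw
      exact Or.inr ⟨hF'.1.trans hF'.2, hG'.1.trans hG'.2,
        hF'.1.trans hG'.2, hG'.1.trans hF'.2⟩
  obtain ⟨p, q, hpq⟩ := core_two_interval ℐ a b c d H
  refine ⟨Sum.inl p, Sum.inr q, fun F hF => ?_⟩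
  rcases hpq F hF with ⟨h1, h2⟩ | ⟨h1, h2⟩
  · exact Or.inl (by rw [hform F hF]; exact Set.mem_union_left _ ⟨p, ⟨h1, h2⟩, rfl⟩)
  · exact Or.inr (by rw [hform F hF]; exact Set.mem_union_right _ ⟨q, ⟨h1, h2⟩, rfl⟩)
end

section
/- Let 𝒞₁ be a finite family of convex sets in the plane, each disjoint from a fixed region R¹, such that any two members of 𝒞₁ intersect. Let T₁ and T₂ be two curves, each homeomorphic to a closed interval of ℝ, such that for every F ∈ 𝒞₁, the sets F ∩ T₁ and F ∩ T₂ are each connected (intervals on the respective curves), and such that for every pair F₁, F₂ ∈ 𝒞₁ the intersection F₁ ∩ F₂ meets T₁ ∪ T₂. Then 𝒞₁ can be pierced by 2 points. -/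
open Set

/-- Helly's theorem on the real line: a finite family of pairwise intersecting
order-connected sets has a common point. -/
lemma helly_line {α : Type*} (S : Finset α) (A : α → Set ℝ)
    (hoc : ∀ F ∈ S, (A F).OrdConnected)
    (hpw : ∀ F ∈ S, ∀ G ∈ S, (A F ∩ A G).Nonempty) :
    ∃ p : ℝ, ∀ F ∈ S, p ∈ A F := by
  classical
  rcases S.eq_empty_or_nonempty with rfl | hS
  · exact ⟨0, by simp⟩
  set w : α → α → ℝ := fun F G =>
    if h : (A F ∩ A G).Nonempty then h.choose else 0 with hw
  have hwmem : ∀ F ∈ S, ∀ G ∈ S, w F G ∈ A F ∩ A G := by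
    intro F hF G hG
    have h := hpw F hF G hG
    simp only [hw, dif_pos h]
    exact h.choose_spec
  set u : α → ℝ := fun F => S.inf' hS (w F) with hu
  have humem : ∀ F ∈ S, u F ∈ A F := by
    intro F hF
    obtain ⟨G, hG, hGe⟩ := Finset.exists_mem_eq_inf' hS (w F)
    have := (hwmem F hF G hG).1
    simpa [hu, hGe] using this
  obtain ⟨F₀, hF₀, hpe⟩ := Finset.exists_mem_eq_sup' hS u
  refine ⟨S.sup' hS u, ?_⟩
  intro G hG
  have h1 : u G ≤ S.sup' hS u := Finset.le_sup' u hG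
  have h2 : S.sup' hS u ≤ w F₀ G := by
    rw [hpe]; exact Finset.inf'_le (w F₀) hG
  exact (hoc G hG).out (humem G hG) (hwmem F₀ hF₀ G hG).2 ⟨h1, h2⟩

/-- Two disjoint order-connected sets in ℝ are totally separated: if one point of `s`
is below one point of `t`, then every point of `s` is below every point of `t`. -/
lemma ordConnected_disjoint_lt {s t : Set ℝ} (hs : s.OrdConnected) (ht : t.OrdConnected)
    (hd : s ∩ t = ∅) {x y x' y' : ℝ} (hx : x ∈ s) (hy : y ∈ t) (hx' : x' ∈ s) (hy' : y' ∈ t)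
    (hxy : x < y) : x' < y' := by
  by_contra h
  push_neg at h
  have hd' : ∀ z, z ∈ s → z ∈ t → False := by
    intro z hzs hzt
    have : z ∈ s ∩ t := ⟨hzs, hzt⟩
    rw [hd] at this; exact this
  have hne : y' < x' := by
    rcases h.lt_or_eq with h' | h'
    · exact h'
    · exact absurd (h' ▸ hx') (fun hh => hd' _ hh hy')
  rcases le_or_gt y x' with hc | hc
  · exact hd' y (hs.out hx hx' ⟨hxy.le, hc⟩) hy
  · exact hd' x' hx' (ht.out hy' hy ⟨hne.le, hc.le⟩)

lemma ordConnected_union_of_inter {s t : Set ℝ} (hs : s.OrdConnected) (ht : t.OrdConnected)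
    (hst : (s ∩ t).Nonempty) : (s ∪ t).OrdConnected := by
  obtain ⟨w, hws, hwt⟩ := hst
  constructor
  rintro x (hx | hx) y (hy | hy) z hz
  · exact Or.inl (hs.out hx hy hz)
  · rcases le_total z w with hzw | hwz
    · exact Or.inl (hs.out hx hws ⟨hz.1, hzw⟩)
    · exact Or.inr (ht.out hwt hy ⟨hwz, hz.2⟩)
  · rcases le_total z w with hzw | hwz
    · exact Or.inr (ht.out hx hwt ⟨hz.1, hzw⟩)
    · exact Or.inl (hs.out hws hy ⟨hwz, hz.2⟩)
  · exact Or.inr (ht.out hx hy hz)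

/-- The cross argument: if `BF, BG` are disjoint with `BF` to the left of `BG`, and
`BF', BG'` each meet both `BF` and `BG`, then `BF'` meets `BG'`. -/
lemma cross_meet {BF BG BF' BG' : Set ℝ} (hF : BF.OrdConnected) (hG : BG.OrdConnected)
    (hF' : BF'.OrdConnected) (hG' : BG'.OrdConnected) (hFG : BF ∩ BG = ∅)
    {x y x' y' : ℝ} (hx : x ∈ BF ∩ BF') (hy : y ∈ BG ∩ BF')
    (hx' : x' ∈ BF ∩ BG') (hy' : y' ∈ BG ∩ BG') (hxy : x < y) :
    (BF' ∩ BG').Nonempty := by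
  have hx'y' : x' < y' := ordConnected_disjoint_lt hF hG hFG hx.1 hy.1 hx'.1 hy'.1 hxy
  have hx'y : x' < y := ordConnected_disjoint_lt hF hG hFG hx.1 hy.1 hx'.1 hy.1 hxy
  have hxy' : x < y' := ordConnected_disjoint_lt hF hG hFG hx.1 hy.1 hx.1 hy'.1 hxy
  refine ⟨max x x', ?_, ?_⟩
  · exact hF'.out hx.2 hy.2 ⟨le_max_left _ _, max_le hxy.le hx'y.le⟩
  · exact hG'.out hx'.2 hy'.2 ⟨le_max_right _ _, max_le hxy'.le hx'y'.le⟩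

/-- Key combinatorial lemma: a finite family of 2-intervals in which every pair
(including a member with itself) meets on one of the two lines can be pierced by
one point on each line. -/
lemma two_intervals_pierce {α : Type*} (𝒟 : Finset α) (A B : α → Set ℝ)
    (hA : ∀ F ∈ 𝒟, (A F).OrdConnected) (hB : ∀ F ∈ 𝒟, (B F).OrdConnected)
    (hpw : ∀ F ∈ 𝒟, ∀ G ∈ 𝒟, (A F ∩ A G).Nonempty ∨ (B F ∩ B G).Nonempty) :
    ∃ s t : ℝ, ∀ F ∈ 𝒟, s ∈ A F ∨ t ∈ B F := by
  classical
  -- bad pairs: those whose B-parts are disjoint; their A-parts must intersect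
  set Sbad : Finset (α × α) := (𝒟 ×ˢ 𝒟).filter (fun P => B P.1 ∩ B P.2 = ∅) with hSbad
  have hmem : ∀ P ∈ Sbad, P.1 ∈ 𝒟 ∧ P.2 ∈ 𝒟 ∧ B P.1 ∩ B P.2 = ∅ := by
    intro P hP
    simp only [hSbad, Finset.mem_filter, Finset.mem_product] at hP
    exact ⟨hP.1.1, hP.1.2, hP.2⟩
  have hAbad : ∀ P ∈ Sbad, (A P.1 ∩ A P.2).Nonempty := by
    intro P hP
    obtain ⟨h1, h2, h3⟩ := hmem P hP
    rcases hpw P.1 h1 P.2 h2 with h | h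
    · exact h
    · rw [h3] at h; exact absurd h (by simp)
  -- the union intervals J P = A P.1 ∪ A P.2 pairwise intersect
  obtain ⟨s, hs⟩ := helly_line Sbad (fun P => A P.1 ∪ A P.2) (by
      intro P hP
      obtain ⟨h1, h2, _⟩ := hmem P hP
      exact ordConnected_union_of_inter (hA _ h1) (hA _ h2) (hAbad P hP))
    (by
      intro P hP Q hQ
      obtain ⟨hP1, hP2, hPb⟩ := hmem P hP
      obtain ⟨hQ1, hQ2, hQb⟩ := hmem Q hQ
      -- four cross pairs
      rcases hpw P.1 hP1 Q.1 hQ1 with h11 | h11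
      · obtain ⟨z, hz⟩ := h11; exact ⟨z, Or.inl hz.1, Or.inl hz.2⟩
      rcases hpw P.1 hP1 Q.2 hQ2 with h12 | h12
      · obtain ⟨z, hz⟩ := h12; exact ⟨z, Or.inl hz.1, Or.inr hz.2⟩
      rcases hpw P.2 hP2 Q.1 hQ1 with h21 | h21
      · obtain ⟨z, hz⟩ := h21; exact ⟨z, Or.inr hz.1, Or.inl hz.2⟩
      rcases hpw P.2 hP2 Q.2 hQ2 with h22 | h22
      · obtain ⟨z, hz⟩ := h22; exact ⟨z, Or.inr hz.1, Or.inr hz.2⟩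
      -- all four intersect on line B: contradiction with badness of Q
      exfalso
      obtain ⟨x, hx⟩ := h11   -- x ∈ B P.1 ∩ B Q.1
      obtain ⟨x', hx'⟩ := h12 -- x' ∈ B P.1 ∩ B Q.2
      obtain ⟨y, hy⟩ := h21   -- y ∈ B P.2 ∩ B Q.1
      obtain ⟨y', hy'⟩ := h22 -- y' ∈ B P.2 ∩ B Q.2
      have hxyne : x ≠ y := by
        rintro rfl
        have : x ∈ B P.1 ∩ B P.2 := ⟨hx.1, hy.1⟩
        rw [hPb] at this; exact this
      rcases hxyne.lt_or_gt with h | h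
      · obtain ⟨m, hm⟩ := cross_meet (hB _ hP1) (hB _ hP2) (hB _ hQ1) (hB _ hQ2) hPb
          ⟨hx.1, hx.2⟩ ⟨hy.1, hy.2⟩ ⟨hx'.1, hx'.2⟩ ⟨hy'.1, hy'.2⟩ h
        rw [hQb] at hm; exact hm
      · have hPb' : B P.2 ∩ B P.1 = ∅ := by
          rw [Set.inter_comm]; exact hPb
        obtain ⟨m, hm⟩ := cross_meet (hB _ hP2) (hB _ hP1) (hB _ hQ1) (hB _ hQ2) hPb'
          ⟨hy.1, hy.2⟩ ⟨hx.1, hx.2⟩ ⟨hy'.1, hy'.2⟩ ⟨hx'.1, hx'.2⟩ h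
        rw [hQb] at hm; exact hm)
  -- now pierce the rest on line B
  set S2 : Finset α := 𝒟.filter (fun F => s ∉ A F) with hS2
  obtain ⟨t, ht⟩ := helly_line S2 B (by
      intro F hF
      simp only [hS2, Finset.mem_filter] at hF
      exact hB _ hF.1)
    (by
      intro F hF G hG
      simp only [hS2, Finset.mem_filter] at hF hG
      by_contra h
      rw [Set.not_nonempty_iff_eq_empty] at h
      have hPbad : (F, G) ∈ Sbad := by
        simp only [hSbad, Finset.mem_filter, Finset.mem_product]
        exact ⟨⟨hF.1, hG.1⟩, h⟩
      rcases hs _ hPbad with h' | h'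
      · exact hF.2 h'
      · exact hG.2 h')
  refine ⟨s, t, ?_⟩
  intro F hF
  by_cases h : s ∈ A F
  · exact Or.inl h
  · exact Or.inr (ht F (by simp only [hS2, Finset.mem_filter]; exact ⟨hF, h⟩))

/-- Order-connectedness of the parameter set of a convex set along an embedded arc. -/
lemma ordConnected_param {γ : ℝ → ℝ × ℝ} {T : Set (ℝ × ℝ)} (hγ : Continuous γ)
    (hinj : InjOn γ (Icc 0 1)) (hT : T = γ '' Icc 0 1) {F : Set (ℝ × ℝ)}
    (hpre : IsPreconnected (F ∩ T)) :
    OrdConnected {t : ℝ | t ∈ Icc (0:ℝ) 1 ∧ γ t ∈ F} := by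
  set e : Icc (0:ℝ) 1 → ℝ × ℝ := fun t => γ t with he
  have hcont : Continuous e := hγ.comp continuous_subtype_val
  have heinj : Function.Injective e := fun a b h => Subtype.ext (hinj a.2 b.2 h)
  have hclosed : IsClosedMap e := hcont.isClosedMap
  have hsub : F ∩ T ⊆ Set.range e := by
    rintro x ⟨-, hxT⟩
    rw [hT] at hxT
    obtain ⟨u, hu, rfl⟩ := hxT
    exact ⟨⟨u, hu⟩, rfl⟩
  have hpre2 : IsPreconnected (e ⁻¹' (F ∩ T)) :=
    hpre.preimage_of_isClosedMap heinj hclosed hsub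
  have himg : IsPreconnected (Subtype.val '' (e ⁻¹' (F ∩ T))) :=
    hpre2.image _ continuous_subtype_val.continuousOn
  have heq : Subtype.val '' (e ⁻¹' (F ∩ T)) = {t : ℝ | t ∈ Icc (0:ℝ) 1 ∧ γ t ∈ F} := by
    ext u
    constructor
    · rintro ⟨⟨v, hv⟩, ⟨hvF, -⟩, rfl⟩
      exact ⟨hv, hvF⟩
    · rintro ⟨hu, huF⟩
      exact ⟨⟨u, hu⟩, ⟨huF, by rw [hT]; exact ⟨u, hu, rfl⟩⟩, rfl⟩
  rw [heq] at himg
  exact himg.ordConnected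

/-- let `𝒞₁` be a finite family of pairwise intersecting convex
sets in the plane, all disjoint from a region `R¹`.  Let `T₁, T₂` be two curves,
each homeomorphic to a closed interval (images of injective paths), such that
each `F ∈ 𝒞₁` intersects each curve in a connected set, and every pairwise
intersection of members meets `T₁ ∪ T₂`.  Then `𝒞₁` can be pierced by 2
points. -/
theorem pierce_by_two_via_curves (𝒞₁ : Finset (Set (ℝ × ℝ)))
    (hconv : ∀ F ∈ 𝒞₁, Convex ℝ F)
    (R1 : Set (ℝ × ℝ)) (hdisj : ∀ F ∈ 𝒞₁, F ∩ R1 = ∅)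
    (hpair : ∀ F₁ ∈ 𝒞₁, ∀ F₂ ∈ 𝒞₁, F₁ ≠ F₂ → (F₁ ∩ F₂).Nonempty)
    (γ₁ γ₂ : ℝ → ℝ × ℝ)
    (hγ₁ : Continuous γ₁) (hinj₁ : InjOn γ₁ (Icc 0 1))
    (hγ₂ : Continuous γ₂) (hinj₂ : InjOn γ₂ (Icc 0 1))
    (T₁ T₂ : Set (ℝ × ℝ)) (hT₁ : T₁ = γ₁ '' Icc 0 1) (hT₂ : T₂ = γ₂ '' Icc 0 1)
    (hconn : ∀ F ∈ 𝒞₁, IsPreconnected (F ∩ T₁) ∧ IsPreconnected (F ∩ T₂))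
    (hmeet : ∀ F₁ ∈ 𝒞₁, ∀ F₂ ∈ 𝒞₁, (F₁ ∩ F₂ ∩ (T₁ ∪ T₂)).Nonempty) :
    ∃ p q : ℝ × ℝ, ∀ F ∈ 𝒞₁, p ∈ F ∨ q ∈ F := by
  set A : Set (ℝ × ℝ) → Set ℝ := fun F => {t : ℝ | t ∈ Icc (0:ℝ) 1 ∧ γ₁ t ∈ F} with hA
  set B : Set (ℝ × ℝ) → Set ℝ := fun F => {t : ℝ | t ∈ Icc (0:ℝ) 1 ∧ γ₂ t ∈ F} with hB
  obtain ⟨s, t, hst⟩ := two_intervals_pierce 𝒞₁ A B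
    (fun F hF => ordConnected_param hγ₁ hinj₁ hT₁ (hconn F hF).1)
    (fun F hF => ordConnected_param hγ₂ hinj₂ hT₂ (hconn F hF).2)
    (by
      intro F hF G hG
      obtain ⟨x, ⟨⟨hxF, hxG⟩, hxT⟩⟩ := hmeet F hF G hG
      rcases hxT with hx | hx
      · rw [hT₁] at hx
        obtain ⟨u, hu, rfl⟩ := hx
        exact Or.inl ⟨u, ⟨hu, hxF⟩, ⟨hu, hxG⟩⟩
      · rw [hT₂] at hx
        obtain ⟨u, hu, rfl⟩ := hx
        exact Or.inr ⟨u, ⟨hu, hxF⟩, ⟨hu, hxG⟩⟩)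
  refine ⟨γ₁ s, γ₂ t, ?_⟩
  intro F hF
  rcases hst F hF with h | h
  · exact Or.inl h.2
  · exact Or.inr h.2
end

section
/- Let L₁, L₂ be two lines through a common point c in the plane, and let Z be the union of two segments [f₁,c] ⊆ L₁ and [c,f₀] ⊆ L₂, ordered from f₁ to f₀. Let A and B be convex sets disjoint from the open quadrant R¹ bounded by the rays from c through f₁ and f₀, such that A ∩ Z and B ∩ Z are nonempty intervals with A ∩ Z entirely preceding B ∩ Z in the order on Z. Suppose p ∈ closure(R²) (the quadrant adjacent to R¹ across L₁-side) and q ∈ R¹. Then the segment [p,q] crosses Z at a point of [f₁,c]; consequently, if B contains such a point p and B intersects R¹ at q, then B ∩ Z contains a point of [f₁,c], constraining the position of B ∩ Z on Z. -/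
private lemma exists_t {gp gq : ℝ} (h1 : gp ≤ 0) (h2 : 0 < gq) :
    ∃ t : ℝ, 0 ≤ t ∧ t ≤ 1 ∧ (1 - t) * gp + t * gq = 0 := by
  have hd : gq - gp ≠ 0 := by intro h; linarith [h]
  refine ⟨-gp / (gq - gp), div_nonneg (by linarith) (by linarith), ?_, ?_⟩
  · rw [div_le_one (by linarith)]; linarith
  · field_simp
    ring

lemma collin {a b x y : ℝ} (hN : 0 < a ^ 2 + b ^ 2) (h : a * y - b * x = 0) :
    ∃ s : ℝ, x = s * a ∧ y = s * b := by
  refine ⟨(a * x + b * y) / (a ^ 2 + b ^ 2), ?_, ?_⟩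
  · rw [div_mul_eq_mul_div, eq_div_iff hN.ne']; linear_combination (-b) * h
  · rw [div_mul_eq_mul_div, eq_div_iff hN.ne']; linear_combination a * h

set_option maxHeartbeats 1000000 in
lemma core {cx cy fx fy gx gy px py qx qy : ℝ}
    (hf : fx ^ 2 + fy ^ 2 = 1) (hc : cx ^ 2 + cy ^ 2 < 1)
    (hD : 0 < (fx - cx) * (gy - cy) - (fy - cy) * (gx - cx))
    (hp1 : px ^ 2 + py ^ 2 ≤ 1)
    (hpg : (fx - cx) * (py - cy) - (fy - cy) * (px - cx) ≤ 0)
    (hph : (gx - cx) * (py - cy) - (gy - cy) * (px - cx) ≤ 0)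
    (hq1 : qx ^ 2 + qy ^ 2 < 1)
    (hqg : 0 < (fx - cx) * (qy - cy) - (fy - cy) * (qx - cx))
    (hqh : (gx - cx) * (qy - cy) - (gy - cy) * (qx - cx) < 0) :
    ∃ t s : ℝ, 0 ≤ t ∧ t ≤ 1 ∧ 0 ≤ s ∧ s ≤ 1 ∧
      (1 - t) * px + t * qx = s * fx + (1 - s) * cx ∧
      (1 - t) * py + t * qy = s * fy + (1 - s) * cy := by
  obtain ⟨t, ht0, ht1, htz⟩ := exists_t hpg hqg
  have hzg : (fx - cx) * (((1 - t) * py + t * qy) - cy)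
      - (fy - cy) * (((1 - t) * px + t * qx) - cx) = 0 := by linear_combination htz
  have hN : 0 < (fx - cx) ^ 2 + (fy - cy) ^ 2 := by
    by_contra h
    push_neg at h
    have h1 : (fx - cx) ^ 2 = 0 :=
      le_antisymm (by linarith [sq_nonneg (fy - cy)]) (sq_nonneg _)
    have h2 : (fy - cy) ^ 2 = 0 :=
      le_antisymm (by linarith [sq_nonneg (fx - cx)]) (sq_nonneg _)
    have e1 : fx = cx := by
      have := pow_eq_zero_iff (n := 2) (by norm_num) |>.mp h1; linarith
    have e2 : fy = cy := by
      have := pow_eq_zero_iff (n := 2) (by norm_num) |>.mp h2; linarith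
    rw [e1, e2] at hf; linarith
  obtain ⟨s, hs1, hs2⟩ := collin hN hzg
  have h3 : (0:ℝ) ≤ 1 - t := by linarith
  have hzh : (gx - cx) * (((1 - t) * py + t * qy) - cy)
      - (gy - cy) * (((1 - t) * px + t * qx) - cx) ≤ 0 := by
    nlinarith [mul_le_mul_of_nonneg_left hph h3, mul_le_mul_of_nonneg_left hqh.le ht0]
  have hD' : (gx - cx) * (fy - cy) - (gy - cy) * (fx - cx) < 0 := by linarith
  have heq : (gx - cx) * (((1 - t) * py + t * qy) - cy)
      - (gy - cy) * (((1 - t) * px + t * qx) - cx)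
      = s * ((gx - cx) * (fy - cy) - (gy - cy) * (fx - cx)) := by
    linear_combination (gx - cx) * hs2 - (gy - cy) * hs1
  have hs0 : 0 ≤ s := by
    by_contra h
    push_neg at h
    nlinarith [mul_pos_of_neg_of_neg h hD']
  have hzn : ((1 - t) * px + t * qx) ^ 2 + ((1 - t) * py + t * qy) ^ 2 ≤ 1 := by
    nlinarith [mul_nonneg (mul_nonneg ht0 h3) (sq_nonneg (px - qx)),
      mul_nonneg (mul_nonneg ht0 h3) (sq_nonneg (py - qy)),
      mul_nonneg h3 (by linarith : (0:ℝ) ≤ 1 - (px ^ 2 + py ^ 2)),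
      mul_nonneg ht0 (by linarith : (0:ℝ) ≤ 1 - (qx ^ 2 + qy ^ 2))]
  have hkey : ((1 - t) * px + t * qx) ^ 2 + ((1 - t) * py + t * qy) ^ 2 - 1
      = (s - 1) * ((1 - (cx ^ 2 + cy ^ 2)) + ((fx - cx) ^ 2 + (fy - cy) ^ 2) * s) := by
    linear_combination (((1 - t) * px + t * qx) + cx + s * (fx - cx)) * hs1
      + (((1 - t) * py + t * qy) + cy + s * (fy - cy)) * hs2 + s * hf
  have hsle : s ≤ 1 := by
    by_contra h
    push_neg at h
    nlinarith [mul_pos (by linarith : (0:ℝ) < s - 1)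
      (by nlinarith : (0:ℝ) < (1 - (cx ^ 2 + cy ^ 2)) + ((fx - cx) ^ 2 + (fy - cy) ^ 2) * s)]
  exact ⟨t, s, ht0, ht1, hs0, hsle, by linarith, by linarith⟩

lemma key_s19 (c f₀ f₁ p q : ℝ × ℝ)
    (hf₁ : f₁.1 ^ 2 + f₁.2 ^ 2 = 1) (hc : c.1 ^ 2 + c.2 ^ 2 < 1)
    (hD : crossP (f₁ - c) (f₀ - c) > 0)
    (hp1 : p.1 ^ 2 + p.2 ^ 2 ≤ 1)
    (hpg : crossP (f₁ - c) (p - c) ≤ 0) (hph : crossP (f₀ - c) (p - c) ≤ 0)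
    (hq1 : q.1 ^ 2 + q.2 ^ 2 < 1)
    (hqg : crossP (f₁ - c) (q - c) > 0) (hqh : crossP (f₀ - c) (q - c) < 0) :
    (segment ℝ p q ∩ segment ℝ f₁ c).Nonempty := by
  simp only [crossP, Prod.fst_sub, Prod.snd_sub] at hD hpg hph hqg hqh
  obtain ⟨t, s, ht0, ht1, hs0, hs1, he1, he2⟩ :=
    core hf₁ hc hD hp1 hpg hph hq1 hqg hqh
  refine ⟨((1 - t) * p.1 + t * q.1, (1 - t) * p.2 + t * q.2),
    ⟨1 - t, t, by linarith, ht0, by ring, ?_⟩,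
    ⟨s, 1 - s, hs0, by linarith, by ring, ?_⟩⟩
  · simp only [Prod.ext_iff, Prod.fst_add, Prod.snd_add, Prod.smul_fst, Prod.smul_snd,
      smul_eq_mul]
    constructor <;> trivial
  · simp only [Prod.ext_iff, Prod.fst_add, Prod.snd_add, Prod.smul_fst, Prod.smul_snd,
      smul_eq_mul]
    exact ⟨by linarith [he1], by linarith [he2]⟩

/-- key claim in Lemma `sep`, Case 1: with `f₁, f₀` on the unit
circle and `c` inside the disk, let `R¹` be the open region of the disk between
the rays from `c` towards `f₁` and `f₀`, and `R²` the region adjacent to `R¹`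
across the line through `c` and `f₁`.  Then the segment from any point
`p ∈ closure R²` to any point `q ∈ R¹` crosses the segment `[f₁, c]`;
consequently, a convex set `B` containing such a point `p` and meeting `R¹`
meets `[f₁, c]`. -/
theorem segment_crosses (c f₀ f₁ : ℝ × ℝ)
    (hf₀ : f₀.1 ^ 2 + f₀.2 ^ 2 = 1) (hf₁ : f₁.1 ^ 2 + f₁.2 ^ 2 = 1)
    (hc : c ∈ unitDisk) (hD : crossP (f₁ - c) (f₀ - c) > 0)
    (R1 R2 : Set (ℝ × ℝ))
    (hR1 : R1 = unitDisk ∩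
      {x | crossP (f₁ - c) (x - c) > 0 ∧ crossP (f₀ - c) (x - c) < 0})
    (hR2 : R2 = unitDisk ∩
      {x | crossP (f₁ - c) (x - c) < 0 ∧ crossP (f₀ - c) (x - c) < 0}) :
    (∀ p ∈ closure R2, ∀ q ∈ R1,
      (segment ℝ p q ∩ segment ℝ f₁ c).Nonempty) ∧
    (∀ B : Set (ℝ × ℝ), Convex ℝ B →
      ∀ p ∈ B ∩ closure R2, ∀ q ∈ B ∩ R1,
        (B ∩ segment ℝ f₁ c).Nonempty) := by
  have hc' : c.1 ^ 2 + c.2 ^ 2 < 1 := hc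
  have hcont : ∀ u : ℝ × ℝ, Continuous fun x : ℝ × ℝ => crossP u (x - c) := by
    intro u
    unfold crossP
    fun_prop
  have hS : IsClosed {x : ℝ × ℝ | crossP (f₁ - c) (x - c) ≤ 0 ∧
      crossP (f₀ - c) (x - c) ≤ 0 ∧ x.1 ^ 2 + x.2 ^ 2 ≤ 1} := by
    have hnorm : Continuous fun x : ℝ × ℝ => x.1 ^ 2 + x.2 ^ 2 := by fun_prop
    exact (isClosed_le (hcont _) continuous_const).inter
      ((isClosed_le (hcont _) continuous_const).inter
        (isClosed_le hnorm continuous_const))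
  have hsub : closure R2 ⊆ {x : ℝ × ℝ | crossP (f₁ - c) (x - c) ≤ 0 ∧
      crossP (f₀ - c) (x - c) ≤ 0 ∧ x.1 ^ 2 + x.2 ^ 2 ≤ 1} := by
    refine closure_minimal ?_ hS
    rw [hR2]
    rintro x ⟨hx0, hx1, hx2⟩
    exact ⟨hx1.le, hx2.le, le_of_lt hx0⟩
  have main : ∀ p ∈ closure R2, ∀ q ∈ R1,
      (segment ℝ p q ∩ segment ℝ f₁ c).Nonempty := by
    intro p hp q hq
    obtain ⟨hpg, hph, hp1⟩ := hsub hp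
    rw [hR1] at hq
    obtain ⟨hq0, hqg, hqh⟩ := hq
    exact key_s19 c f₀ f₁ p q hf₁ hc' hD hp1 hpg hph hq0 hqg hqh
  refine ⟨main, fun B hB p hp q hq => ?_⟩
  obtain ⟨x, hx1, hx2⟩ := main p hp.2 q hq.2
  exact ⟨x, hB.segment_subset hp.1 hq.1 hx1, hx2⟩
end
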